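/- Let A and B be unital *-algebras over ℂ, Θ : A ⊗ B → A ⊗ B a unital *-algebra homomorphism, and σ a state on B. For every B̂ ∈ B, the element ε_σ(star B̂ * B̂) − star(ε_σ(B̂)) * ε_σ(B̂) of A is a sum of squares, where ε_σ(B̂) = η_σ(Θ(1 ⊗ B̂)). -/

import Mathlib

open scoped TensorProduct

noncomputable section

/-- A linear functional on a unital *-algebra over ℂ is *positive* if it takes
nonnegative real values on elements of the form `star x * x`. -/
def IsPositiveLF {A : Type} [Ring A] [Algebra ℂ A] [StarRing A] (φ : A →ₗ[ℂ] ℂ) : Prop :=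
  ∀ x : A, ∃ r : ℝ, 0 ≤ r ∧ φ (star x * x) = (r : ℂ)

/-- A *state* on a unital *-algebra over ℂ: a positive, normalised linear functional
compatible with the star operation. -/
def IsState {A : Type} [Ring A] [Algebra ℂ A] [StarRing A] (φ : A →ₗ[ℂ] ℂ) : Prop :=
  IsPositiveLF φ ∧ φ 1 = 1 ∧ ∀ x : A, φ (star x) = starRingEnd ℂ (φ x)

/-- An element of a *-algebra is a *sum of squares* if it is a finite sum of
elements of the form `star c * c`. -/
def IsSumOfStarSquares {A : Type} [Ring A] [StarRing A] (a : A) : Prop :=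
  ∃ (n : ℕ) (c : Fin n → A), a = ∑ i, star (c i) * c i

/-- The product functional `ω ⊗ σ`, determined by `(ω ⊗ σ)(a ⊗ b) = ω(a) * σ(b)`. -/
def prodLF {A B : Type} [AddCommGroup A] [Module ℂ A] [AddCommGroup B] [Module ℂ B]
    (ω : A →ₗ[ℂ] ℂ) (σ : B →ₗ[ℂ] ℂ) : A ⊗[ℂ] B →ₗ[ℂ] ℂ :=
  (TensorProduct.lid ℂ ℂ).toLinearMap ∘ₗ TensorProduct.map ω σ

lemma prodLF_tmul {A B : Type} [AddCommGroup A] [Module ℂ A] [AddCommGroup B] [Module ℂ B]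
    (ω : A →ₗ[ℂ] ℂ) (σ : B →ₗ[ℂ] ℂ) (a : A) (b : B) :
    prodLF ω σ (a ⊗ₜ[ℂ] b) = ω a * σ b := by
  simp [prodLF, smul_eq_mul, mul_comm]

/-- The slice map `η_σ : A ⊗ B → A`, determined by `η_σ(a ⊗ b) = σ(b) • a`. -/
def sliceLF {A B : Type} [AddCommGroup A] [Module ℂ A] [AddCommGroup B] [Module ℂ B]
    (σ : B →ₗ[ℂ] ℂ) : A ⊗[ℂ] B →ₗ[ℂ] A :=
  (TensorProduct.rid ℂ A).toLinearMap ∘ₗ TensorProduct.map LinearMap.id σ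

lemma sliceLF_tmul {A B : Type} [AddCommGroup A] [Module ℂ A] [AddCommGroup B] [Module ℂ B]
    (σ : B →ₗ[ℂ] ℂ) (a : A) (b : B) : sliceLF σ (a ⊗ₜ[ℂ] b) = σ b • a := by
  simp [sliceLF]

/-- The star operation on the algebraic tensor product `A ⊗[ℂ] B`, determined by
`star (a ⊗ b) = star a ⊗ star b` (it is additive). -/
def tensorStar {A B : Type} [AddCommGroup A] [Module ℂ A] [StarAddMonoid A] [StarModule ℂ A]
    [AddCommGroup B] [Module ℂ B] [StarAddMonoid B] [StarModule ℂ B] :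
    A ⊗[ℂ] B →+ A ⊗[ℂ] B :=
  TensorProduct.liftAddHom
    { toFun := fun a =>
        { toFun := fun b => star a ⊗ₜ[ℂ] star b
          map_zero' := by simp
          map_add' := fun b b' => by simp [star_add, TensorProduct.tmul_add] }
      map_zero' := by ext b; simp
      map_add' := fun a a' => by ext b; simp [star_add, TensorProduct.add_tmul] }
    (fun c a b => by
      simp only [AddMonoidHom.coe_mk, ZeroHom.coe_mk, star_smul, starRingEnd_apply,
        TensorProduct.smul_tmul, TensorProduct.smul_tmul'])

@[simp] lemma tensorStar_tmul {A B : Type} [AddCommGroup A] [Module ℂ A] [StarAddMonoid A]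
    [StarModule ℂ A] [AddCommGroup B] [Module ℂ B] [StarAddMonoid B] [StarModule ℂ B]
    (a : A) (b : B) : tensorStar (a ⊗ₜ[ℂ] b) = star a ⊗ₜ[ℂ] star b := rfl

/-- The pre-instrument `ℐ_σ(B̂)` associated to a coupling map `Θ`: it sends the
functional `ω` to the functional `a ↦ (ω ⊗ σ)(Θ(a ⊗ B̂))`. -/
def preInstrument {A B : Type} [Ring A] [Algebra ℂ A] [Ring B] [Algebra ℂ B]
    (Θ : A ⊗[ℂ] B →ₗ[ℂ] A ⊗[ℂ] B) (σ : B →ₗ[ℂ] ℂ) (Bhat : B)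
    (ω : A →ₗ[ℂ] ℂ) : A →ₗ[ℂ] ℂ :=
  prodLF ω σ ∘ₗ Θ ∘ₗ (TensorProduct.mk ℂ A B).flip Bhat

open scoped ComplexOrder in
lemma isSumOfStarSquares_of_posSemidef {A : Type} [Ring A] [Algebra ℂ A] [StarRing A]
    [StarModule ℂ A] {ι : Type} [Fintype ι] (M : Matrix ι ι ℂ) (hM : M.PosSemidef)
    (a : ι → A) : IsSumOfStarSquares (∑ i, ∑ j, M i j • (star (a i) * a j)) := by
  obtain ⟨N, hN⟩ : ∃ N : Matrix ι ι ℂ, M = N.conjTranspose * N := by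
    classical
    open scoped MatrixOrder Matrix.Norms.L2Operator in
    exact CStarAlgebra.nonneg_iff_eq_star_mul_self.mp hM.nonneg
  set d : ι → A := fun k => ∑ i, N k i • a i with hd
  have key : ∑ k, star (d k) * d k = ∑ i, ∑ j, M i j • (star (a i) * a j) := by
    have step : ∀ k, star (d k) * d k
        = ∑ i, ∑ j, (star (N k i) * N k j) • (star (a i) * a j) := by
      intro k
      have : star (d k) = ∑ i, star (N k i) • star (a i) := by
        simp [hd, star_smul]
      rw [this, hd, Finset.sum_mul_sum]
      exact Finset.sum_congr rfl fun i _ => Finset.sum_congr rfl fun j _ =>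
        smul_mul_smul_comm _ _ _ _
    calc ∑ k, star (d k) * d k
        = ∑ k, ∑ i, ∑ j, (star (N k i) * N k j) • (star (a i) * a j) :=
          Finset.sum_congr rfl fun k _ => step k
      _ = ∑ i, ∑ k, ∑ j, (star (N k i) * N k j) • (star (a i) * a j) := Finset.sum_comm
      _ = ∑ i, ∑ j, ∑ k, (star (N k i) * N k j) • (star (a i) * a j) :=
          Finset.sum_congr rfl fun i _ => Finset.sum_comm
      _ = ∑ i, ∑ j, (∑ k, star (N k i) * N k j) • (star (a i) * a j) := by
          simp [Finset.sum_smul]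
      _ = ∑ i, ∑ j, M i j • (star (a i) * a j) := by
          refine Finset.sum_congr rfl fun i _ => Finset.sum_congr rfl fun j _ => ?_
          congr 1
          rw [hN, Matrix.mul_apply]
          simp [Matrix.conjTranspose_apply]
  refine ⟨Fintype.card ι, d ∘ (Fintype.equivFin ι).symm, ?_⟩
  rw [← key]
  exact (Equiv.sum_comp (Fintype.equivFin ι).symm fun k => star (d k) * d k).symm

lemma exists_fin_rep {A B : Type} [AddCommGroup A] [Module ℂ A] [AddCommGroup B] [Module ℂ B]
    (x : A ⊗[ℂ] B) : ∃ (n : ℕ) (a : Fin n → A) (b : Fin n → B), x = ∑ i, a i ⊗ₜ[ℂ] b i := by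
  obtain ⟨S, hx⟩ := TensorProduct.exists_finset x
  refine ⟨S.card, fun i => (S.equivFin.symm i).1.1, fun i => (S.equivFin.symm i).1.2, ?_⟩
  rw [hx, ← Finset.sum_coe_sort S (fun p => p.1 ⊗ₜ[ℂ] p.2),
    ← Equiv.sum_comp S.equivFin.symm (fun p : {p // p ∈ S} => p.1.1 ⊗ₜ[ℂ] p.1.2)]

open scoped ComplexOrder in
lemma gram_posSemidef {B : Type} [Ring B] [Algebra ℂ B] [StarRing B] [StarModule ℂ B]
    (σ : B →ₗ[ℂ] ℂ) (hσ : IsState σ) {n : ℕ} (c : Fin n → B) :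
    Matrix.PosSemidef (Matrix.of fun i j => σ (star (c i) * c j)) := by
  rw [Matrix.posSemidef_iff_dotProduct_mulVec]
  constructor
  · show Matrix.conjTranspose _ = _
    ext i j
    rw [Matrix.conjTranspose_apply]
    show star (σ (star (c j) * c i)) = σ (star (c i) * c j)
    have h := hσ.2.2 (star (c j) * c i)
    rw [star_mul, star_star] at h
    rw [h]
    rfl
  · intro v
    have hdot : dotProduct (star v)
        ((Matrix.of fun i j => σ (star (c i) * c j)).mulVec v)
        = σ (star (∑ i, v i • c i) * (∑ i, v i • c i)) := by
      have hsy : star (∑ i, v i • c i) = ∑ i, starRingEnd ℂ (v i) • star (c i) := by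
        rw [star_sum]
        exact Finset.sum_congr rfl fun i _ => by rw [star_smul]; rfl
      rw [hsy, Finset.sum_mul_sum, dotProduct, map_sum]
      refine Finset.sum_congr rfl fun i _ => ?_
      rw [Matrix.mulVec, dotProduct, map_sum, Finset.mul_sum]
      refine Finset.sum_congr rfl fun j _ => ?_
      rw [smul_mul_smul_comm, map_smul]
      simp only [Pi.star_apply, smul_eq_mul, Matrix.of_apply, starRingEnd_apply]
      ring
    rw [hdot]
    obtain ⟨r, hr, hry⟩ := hσ.1 (∑ i, v i • c i)
    rw [hry]
    exact Complex.zero_le_real.mpr hr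

open scoped ComplexOrder in
lemma schwarz_defect_sos {A B : Type} [Ring A] [Algebra ℂ A] [StarRing A] [StarModule ℂ A]
    [Ring B] [Algebra ℂ B] [StarRing B] [StarModule ℂ B]
    (σ : B →ₗ[ℂ] ℂ) (hσ : IsState σ) (x : A ⊗[ℂ] B) :
    IsSumOfStarSquares (sliceLF σ (tensorStar x * x) - star (sliceLF σ x) * sliceLF σ x) := by
  obtain ⟨n, a, b, hx⟩ := exists_fin_rep x
  have Mij : ∀ i j : Fin n,
      σ (star (b i - σ (b i) • 1) * (b j - σ (b j) • 1))
        = σ (star (b i) * b j) - starRingEnd ℂ (σ (b i)) * σ (b j) := by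
    intro i j
    have hsc : star (b i - σ (b i) • 1) = star (b i) - starRingEnd ℂ (σ (b i)) • 1 := by
      rw [star_sub, star_smul, star_one]; rfl
    have expand : star (b i - σ (b i) • 1) * (b j - σ (b j) • 1)
        = star (b i) * b j - σ (b j) • star (b i) - starRingEnd ℂ (σ (b i)) • b j
          + (starRingEnd ℂ (σ (b i)) * σ (b j)) • (1 : B) := by
      rw [hsc, sub_mul, mul_sub, mul_sub, smul_mul_assoc, smul_mul_assoc,
        mul_smul_comm, mul_smul_comm, mul_one, smul_smul]
      simp only [one_mul]
      abel
    rw [expand, map_add, map_sub, map_sub, map_smul, map_smul, map_smul, smul_eq_mul,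
      smul_eq_mul, smul_eq_mul, hσ.2.1, hσ.2.2 (b i)]
    ring
  have hMpsd := gram_posSemidef σ hσ (fun i => b i - σ (b i) • 1)
  have h1 : sliceLF σ x = ∑ i, σ (b i) • a i := by
    rw [hx, map_sum]
    exact Finset.sum_congr rfl fun i _ => sliceLF_tmul σ _ _
  have h3 : tensorStar x * x = ∑ i, ∑ j, (star (a i) * a j) ⊗ₜ[ℂ] (star (b i) * b j) := by
    rw [hx, map_sum, Finset.sum_mul_sum]
    refine Finset.sum_congr rfl fun i _ => Finset.sum_congr rfl fun j _ => ?_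
    rw [tensorStar_tmul, Algebra.TensorProduct.tmul_mul_tmul]
  have h4 : sliceLF σ (tensorStar x * x)
      = ∑ i, ∑ j, σ (star (b i) * b j) • (star (a i) * a j) := by
    rw [h3, map_sum]
    exact Finset.sum_congr rfl fun i _ => by
      rw [map_sum]; exact Finset.sum_congr rfl fun j _ => sliceLF_tmul σ _ _
  have h5 : star (sliceLF σ x) * sliceLF σ x
      = ∑ i, ∑ j, (starRingEnd ℂ (σ (b i)) * σ (b j)) • (star (a i) * a j) := by
    have hst : star (sliceLF σ x) = ∑ i, starRingEnd ℂ (σ (b i)) • star (a i) := by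
      rw [h1, star_sum]
      exact Finset.sum_congr rfl fun i _ => by rw [star_smul]; rfl
    rw [hst, h1, Finset.sum_mul_sum]
    exact Finset.sum_congr rfl fun i _ => Finset.sum_congr rfl fun j _ =>
      smul_mul_smul_comm _ _ _ _
  have hdiff : sliceLF σ (tensorStar x * x) - star (sliceLF σ x) * sliceLF σ x
      = ∑ i, ∑ j, (Matrix.of fun i j =>
          σ (star (b i - σ (b i) • 1) * (b j - σ (b j) • 1))) i j • (star (a i) * a j) := by
    rw [h4, h5, ← Finset.sum_sub_distrib]
    refine Finset.sum_congr rfl fun i _ => ?_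
    rw [← Finset.sum_sub_distrib]
    refine Finset.sum_congr rfl fun j _ => ?_
    rw [← sub_smul, Matrix.of_apply, Mij]
  rw [hdiff]
  exact isSumOfStarSquares_of_posSemidef _ hMpsd a

variable {A B : Type}
  [Ring A] [Algebra ℂ A] [StarRing A] [StarModule ℂ A]
  [Ring B] [Algebra ℂ B] [StarRing B] [StarModule ℂ B]

/-- the Kadison–Schwarz-type defect `ε_σ(B̂* B̂) − ε_σ(B̂)* ε_σ(B̂)` is a
sum of squares in `A`. -/
theorem induced_observable_schwarz
    (Θ : A ⊗[ℂ] B →ₐ[ℂ] A ⊗[ℂ] B)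
    (hΘstar : ∀ x : A ⊗[ℂ] B, Θ (tensorStar x) = tensorStar (Θ x))
    (σ : B →ₗ[ℂ] ℂ) (hσ : IsState σ) (Bhat : B) :
    IsSumOfStarSquares
      (sliceLF σ (Θ ((1 : A) ⊗ₜ[ℂ] (star Bhat * Bhat)))
        - star (sliceLF σ (Θ ((1 : A) ⊗ₜ[ℂ] Bhat))) * sliceLF σ (Θ ((1 : A) ⊗ₜ[ℂ] Bhat))) := by
  have e1 : (1 : A) ⊗ₜ[ℂ] (star Bhat * Bhat)
      = tensorStar ((1 : A) ⊗ₜ[ℂ] Bhat) * ((1 : A) ⊗ₜ[ℂ] Bhat) := by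
    rw [tensorStar_tmul, Algebra.TensorProduct.tmul_mul_tmul, star_one, one_mul]
  rw [e1, map_mul, hΘstar]
  exact schwarz_defect_sos σ hσ _
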